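/- arXiv:1001.5094 — 2 statements merged into one kernel-verified Lean document; each statement's English description precedes it below -/
import Mathlib

section
/- Let M be an n×n matrix over ℝ and suppose M^k = 1 for some positive integer k. Then the characteristic polynomial p of M is palindromic or anti-palindromic: p.reverse = p or p.reverse = −p. -/
open Polynomial Matrix

private lemma rev_multiset_prod {R : Type*} [CommRing R] [NoZeroDivisors R]
    (s : Multiset R[X]) : s.prod.reverse = (s.map Polynomial.reverse).prod := by
  induction s using Multiset.induction_on with
  | empty => simp [Polynomial.reverse]
  | cons a s ih => simp [Polynomial.reverse_mul_of_domain, ih]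

private lemma rev_X_sub_C {R : Type*} [Ring R] [Nontrivial R] (r : R) :
    (X - C r).reverse = 1 - C r * X := by
  rw [Polynomial.reverse, natDegree_X_sub_C, reflect_sub, reflect_C r 1, pow_one,
    Polynomial.reflect_one_X]

theorem charpoly_of_periodic_matrix_palindromic_or_antipalindromic
    (n k : ℕ) (hk : 0 < k) (M : Matrix (Fin n) (Fin n) ℝ) (hM : M ^ k = 1) :
    (Matrix.charpoly M).reverse = Matrix.charpoly M ∨
    (Matrix.charpoly M).reverse = -Matrix.charpoly M := by
  classical
  set p := M.charpoly with hpdef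
  set φ : ℝ →+* ℂ := algebraMap ℝ ℂ with hφ
  set N : Matrix (Fin n) (Fin n) ℂ := M.map φ with hNdef
  have hNk : N ^ k = 1 := by
    have : (RingHom.mapMatrix φ) (M ^ k) = (RingHom.mapMatrix φ) 1 := by rw [hM]
    simpa [map_pow] using this
  have hP : N.charpoly = p.map φ := Matrix.charpoly_map M φ
  set P := N.charpoly with hPdef
  -- every root of P is a k-th root of unity
  have hroot : ∀ r ∈ P.roots, r ^ k = 1 := by
    intro r hr
    have h0 : P.eval r = 0 := Polynomial.isRoot_of_mem_roots hr
    have hdet : (Matrix.scalar (Fin n) r - N).det = 0 := by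
      have h1 := _root_.eval_det (charmatrix N) r
      rw [Matrix.matPolyEquiv_charmatrix, eval_sub, eval_X, eval_C] at h1
      rw [← h1]
      exact h0
    obtain ⟨v, hv, hmv⟩ := Matrix.exists_mulVec_eq_zero_iff.mpr hdet
    have hNv : N *ᵥ v = r • v := by
      have h1 : (Matrix.scalar (Fin n) r - N) *ᵥ v
          = Matrix.scalar (Fin n) r *ᵥ v - N *ᵥ v := Matrix.sub_mulVec _ _ _
      have h2 : Matrix.scalar (Fin n) r *ᵥ v = r • v := by
        rw [Matrix.scalar_apply]
        ext i
        simp [Matrix.mulVec_diagonal]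
      rw [hmv, h2] at h1
      exact (sub_eq_zero.mp h1.symm).symm
    have hpow : ∀ j, (N ^ j) *ᵥ v = r ^ j • v := by
      intro j
      induction j with
      | zero => simp
      | succ j ih =>
        rw [pow_succ, ← Matrix.mulVec_mulVec, hNv, Matrix.mulVec_smul, ih, pow_succ,
          smul_smul, mul_comm r (r ^ j)]
    have hkv : (r ^ k - 1) • v = 0 := by
      have h3 := hpow k
      rw [hNk, Matrix.one_mulVec] at h3
      rw [sub_smul, one_smul, ← h3, sub_self]
    rcases smul_eq_zero.mp hkv with h | h
    · exact sub_eq_zero.mp h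
    · exact absurd h hv
  have hsplits : P.Splits := IsAlgClosed.splits P
  have hmonic : P.Monic := N.charpoly_monic
  -- P has real coefficients: stable under conjugation
  have hconj : P.map (starRingEnd ℂ) = P := by
    rw [hP, Polynomial.map_map]
    congr 1
    ext x
    simp [hφ, Complex.conj_ofReal]
  have hrootsconj : P.roots.map (starRingEnd ℂ) = P.roots := by
    have h := hsplits.roots_map (starRingEnd ℂ)
    rw [hconj] at h
    exact h.symm
  -- on roots, inversion agrees with conjugation
  have hinv : ∀ r ∈ P.roots, r⁻¹ = (starRingEnd ℂ) r := by
    intro r hr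
    have hk1 : r ^ k = 1 := hroot r hr
    have hne : r ≠ 0 := by
      rintro rfl
      rw [zero_pow hk.ne'] at hk1
      exact zero_ne_one hk1
    have hns : (Complex.normSq r : ℝ) ^ k = 1 := by
      have h1 : ((Complex.normSq r : ℂ)) ^ k = 1 := by
        rw [← Complex.mul_conj, mul_pow, ← map_pow, hk1, RingHom.map_one, mul_one]
      exact_mod_cast h1
    have hns1 : Complex.normSq r = 1 := by
      rcases lt_trichotomy (Complex.normSq r) 1 with h | h | h
      · have := pow_lt_one₀ (Complex.normSq_nonneg r) h hk.ne'
        linarith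
      · exact h
      · have := one_lt_pow₀ h hk.ne'
        linarith
    have hmul : r * (starRingEnd ℂ) r = 1 := by
      rw [Complex.mul_conj, hns1, Complex.ofReal_one]
    exact inv_eq_of_mul_eq_one_right hmul
  have hrootsinv : P.roots.map (fun r => r⁻¹) = P.roots := by
    rw [Multiset.map_congr rfl hinv, hrootsconj]
  have hfact : P = (P.roots.map fun r => X - C r).prod :=
    hsplits.eq_prod_roots_of_monic hmonic
  -- constant coefficient is ±1
  have hdetk : M.det ^ k = 1 := by rw [← Matrix.det_pow, hM, Matrix.det_one]
  have hdet1 : M.det = 1 ∨ M.det = -1 := by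
    have habsk : |M.det| ^ k = 1 := by rw [← abs_pow, hdetk, abs_one]
    have habs : |M.det| = 1 := by
      rcases lt_trichotomy |M.det| 1 with h | h | h
      · have := pow_lt_one₀ (abs_nonneg _) h hk.ne'
        linarith
      · exact h
      · have := one_lt_pow₀ h hk.ne'
        linarith
    exact abs_eq (by norm_num : (0:ℝ) ≤ 1) |>.mp habs
  have hcoeff : p.coeff 0 = (-1 : ℝ) ^ n * M.det := by
    have h := Matrix.det_eq_sign_charpoly_coeff M
    rw [Fintype.card_fin] at h
    have hsq : ((-1 : ℝ) ^ n) * ((-1 : ℝ) ^ n) = 1 := by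
      rw [← pow_add]
      exact Even.neg_one_pow ⟨n, rfl⟩
    rw [h, ← mul_assoc, hsq, one_mul]
  have hc : p.coeff 0 = 1 ∨ p.coeff 0 = -1 := by
    rcases Nat.even_or_odd n with hn | hn
    · rw [hcoeff, hn.neg_one_pow, one_mul]; exact hdet1
    · rw [hcoeff, hn.neg_one_pow, neg_one_mul]
      rcases hdet1 with h | h
      · right; rw [h]
      · left; rw [h, neg_neg]
  -- key identity over ℂ
  have hc0 : P.coeff 0 = φ (p.coeff 0) := by rw [hP, coeff_map]
  have heval0 : P.coeff 0 = (P.roots.map fun r => -r).prod := by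
    conv_lhs => rw [coeff_zero_eq_eval_zero, hfact]
    rw [Polynomial.eval_multiset_prod, Multiset.map_map]
    congr 1
    apply Multiset.map_congr rfl
    intro r _
    simp
  have key : P.reverse = C (P.coeff 0) * P := by
    calc P.reverse = ((P.roots.map fun r => X - C r).prod).reverse := by rw [← hfact]
      _ = (P.roots.map fun r => (X - C r).reverse).prod := by
          rw [rev_multiset_prod, Multiset.map_map]
          rfl
      _ = (P.roots.map fun r => (-C r) * (X - C r⁻¹)).prod := by
          apply congrArg
          apply Multiset.map_congr rfl
          intro r hr
          have hne : r ≠ 0 := by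
            rintro rfl
            have := hroot 0 hr
            rw [zero_pow hk.ne'] at this
            exact zero_ne_one this
          rw [rev_X_sub_C, neg_mul, mul_sub, ← C_mul, mul_inv_cancel₀ hne, C_1]
          ring
      _ = (P.roots.map fun r => -C r).prod * (P.roots.map fun r => X - C r⁻¹).prod := by
          rw [← Multiset.prod_map_mul]
      _ = C (P.coeff 0) * P := by
          congr 1
          · have h1 : (P.roots.map fun r => -C r) = (P.roots.map fun r => -r).map C := by
              rw [Multiset.map_map]
              apply Multiset.map_congr rfl
              intro r _
              simp
            rw [h1, ← map_multiset_prod, ← heval0]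
          · have h2 : (P.roots.map fun r => X - C r⁻¹)
                = ((P.roots.map fun r => r⁻¹).map fun r => X - C r) := by
              rw [Multiset.map_map]; rfl
            rw [h2, hrootsinv, ← hfact]
  -- transfer back to ℝ
  have hrevmap : (p.reverse).map φ = (p.map φ).reverse := by
    rw [Polynomial.reverse, Polynomial.reverse, ← Polynomial.reflect_map,
      Polynomial.natDegree_map]
  have heqC : p.reverse = C (p.coeff 0) * p := by
    apply Polynomial.map_injective φ φ.injective
    rw [hrevmap, ← hP, key, Polynomial.map_mul, map_C, hc0, hP]
  rcases hc with h | h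
  · left; rw [heqC, h, C_1, one_mul]
  · right; rw [heqC, h, map_neg, C_1, neg_mul, one_mul]
end

section
/- Let p ∈ ℝ[X] be a monic polynomial such that every complex root z of p (i.e., every root of the image of p in ℂ[X]) has |z| = 1. Then p.reverse = p or p.reverse = −p, i.e., p is palindromic or anti-palindromic. -/
open Polynomial

private lemma reverse_multiset_prod (s : Multiset ℂ) (hs : ∀ μ ∈ s, μ ≠ 0) :
    (s.map (fun μ => X - C μ)).prod.reverse =
      C ((s.map (fun μ => -μ)).prod) * (s.map (fun μ => X - C μ⁻¹)).prod := by
  induction s using Multiset.induction with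
  | empty =>
    simp only [Multiset.map_zero, Multiset.prod_zero, mul_one]
    rw [← C_1, reverse_C]
  | cons a s ih =>
    have ha : a ≠ 0 := hs a (Multiset.mem_cons_self a s)
    have ih' := ih (fun μ hμ => hs μ (Multiset.mem_cons_of_mem hμ))
    simp only [Multiset.map_cons, Multiset.prod_cons, reverse_mul_of_domain, ih']
    have h1 : (X - C a).reverse = C (-a) * (X - C a⁻¹) := by
      have e : (X - C a : ℂ[X]) = X + C (-a) := by rw [C_neg, sub_eq_add_neg]
      have hX : (X : ℂ[X]).reverse = 1 := by
        rw [show (X : ℂ[X]) = 1 * X by ring, reverse_mul_X, ← C_1, reverse_C]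
      rw [e, reverse_add_C, hX, natDegree_X, pow_one, mul_sub, ← C_mul]
      rw [show -a * a⁻¹ = -1 by field_simp]; simp only [C_neg, C_1]
      ring
    rw [h1, map_mul]
    ring

theorem palindromic_or_antipalindromic_of_roots_on_unit_circle
    (p : Polynomial ℝ) (hp : p.Monic)
    (h : ∀ z : ℂ, (p.map (algebraMap ℝ ℂ)).IsRoot z → ‖z‖ = 1) :
    p.reverse = p ∨ p.reverse = -p := by
  set f := algebraMap ℝ ℂ with hf
  set q : ℂ[X] := p.map f with hq
  have hqm : q.Monic := hp.map _
  have hq0 : q ≠ 0 := hqm.ne_zero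
  have hsplit : q.Splits := IsAlgClosed.splits q
  have hprod : q = (q.roots.map (fun μ => X - C μ)).prod :=
    hsplit.eq_prod_roots_of_monic hqm
  have habs : ∀ μ ∈ q.roots, ‖μ‖ = 1 := fun μ hμ =>
    h μ ((mem_roots hq0).mp hμ)
  have hroots0 : ∀ μ ∈ q.roots, μ ≠ 0 := by
    intro μ hμ hzero
    have := habs μ hμ
    rw [hzero] at this; simp at this
  -- roots are closed under conjugation
  have hconj : q.roots.map (starRingEnd ℂ) = q.roots := by
    have hmapq : q.map (starRingEnd ℂ) = q := by
      rw [hq, Polynomial.map_map]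
      congr 1
      ext x : 1
      simp [hf, Complex.conj_ofReal]
    have := hsplit.roots_map (starRingEnd ℂ)
    rw [hmapq] at this
    exact this.symm
  -- hence closed under inversion
  have hinv : q.roots.map (fun μ => μ⁻¹) = q.roots := by
    have e : q.roots.map (fun μ => μ⁻¹) = q.roots.map (starRingEnd ℂ) :=
      Multiset.map_congr rfl fun μ hμ =>
        RCLike.inv_eq_conj (by exact habs μ hμ)
    rw [e, hconj]
  set c : ℂ := (q.roots.map (fun μ => -μ)).prod with hc
  have hrev : q.reverse = C c * q := by
    calc q.reverse = (q.roots.map (fun μ => X - C μ)).prod.reverse := by rw [← hprod]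
    _ = C c * (q.roots.map (fun μ => X - C μ⁻¹)).prod :=
        reverse_multiset_prod _ hroots0
    _ = C c * ((q.roots.map (fun μ => μ⁻¹)).map (fun μ => X - C μ)).prod := by
        rw [Multiset.map_map]; rfl
    _ = C c * q := by rw [hinv, ← hprod]
  -- c = f (p.coeff 0)
  have hceval : c = f (p.coeff 0) := by
    have h1 : q.eval 0 = c := by
      conv_lhs => rw [hprod]
      rw [eval_multiset_prod, Multiset.map_map, hc]
      congr 1
      apply Multiset.map_congr rfl
      intro μ _
      simp
    have h2 : q.eval 0 = f (p.coeff 0) := by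
      rw [hq, eval_map, eval₂_at_zero, coeff_zero_eq_eval_zero]
    rw [← h1, h2]
  -- pull back to ℝ
  have hrevmap : (p.reverse).map f = q.reverse := by
    rw [reverse, reverse, hq, ← reflect_map,
      natDegree_map_eq_of_injective (algebraMap ℝ ℂ).injective]
  have hkey : p.reverse = C (p.coeff 0) * p := by
    apply Polynomial.map_injective f (algebraMap ℝ ℂ).injective
    rw [hrevmap, hrev, Polynomial.map_mul, Polynomial.map_C, hceval, hq]
  -- coeff 0 of both sides
  have hc0 : p.coeff 0 * p.coeff 0 = 1 := by
    have := congrArg (fun r => r.coeff 0) hkey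
    simpa [coeff_zero_reverse, hp.leadingCoeff, coeff_C_mul] using this.symm
  rcases mul_self_eq_one_iff.mp hc0 with h1 | h1
  · left; rw [hkey, h1, C_1, one_mul]
  · right; rw [hkey, h1, C_neg, C_1, neg_mul, one_mul]
end
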